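/- Let N ≥ 1 and let A be an L^{(r)}_{ℓ₁,…,ℓ_r}-free set of integers, and set A_j = A ∩ ((j−1)N, jN] for j = 1,…,N. Then Σ_{j ≤ N} |A_j|^{ℓ₁⋯ℓ_{r−1}} ≤ C · N^{ℓ₁⋯ℓ_{r−1} − 1} for a constant C depending only on r, ℓ₁,…,ℓ_r. -/

import Mathlib

open Pointwise

/-- `A ⊆ G` is `L^{(r)}_{ℓ₁,…,ℓ_r}`-free. -/
def LFree {G : Type*} [AddCommGroup G] [DecidableEq G] (r : ℕ) (ℓ : Fin r → ℕ)
    (A : Set G) : Prop :=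
  ∀ L : Fin r → Finset G, (∀ i, (L i).card = ℓ i) → ¬ ((↑(∑ i, L i) : Set G) ⊆ A)

lemma lfree_shift {r : ℕ} {ℓ : Fin (r+1) → ℕ} {A : Set ℤ} (hA : LFree (r+1) ℓ A)
    (B : Finset ℤ) (hB : B.card = ℓ 0) :
    LFree r (ℓ ∘ Fin.succ) {x : ℤ | ∀ b ∈ B, b + x ∈ A} := by
  intro L hL hsub
  refine hA (Fin.cases B L) (fun i => ?_) ?_
  · induction i using Fin.cases with
    | zero => simpa using hB
    | succ i => simpa using hL i
  · rw [Fin.sum_univ_succ]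
    simp only [Fin.cases_zero, Fin.cases_succ]
    intro x hx
    rw [Finset.coe_add] at hx  -- maybe not needed
    obtain ⟨b, hb, s, hs, rfl⟩ := Set.mem_add.1 hx
    exact hsub hs b hb


noncomputable def mof (T : Finset ℤ) : ℤ := WithTop.untopD 0 T.min

lemma mof_eq {T : Finset ℤ} (h : T.Nonempty) : mof T = T.min' h := by
  rw [mof, ← Finset.coe_min' h]; rfl

lemma mof_mem {T : Finset ℤ} (h : T.Nonempty) : mof T ∈ T := by
  rw [mof_eq h]; exact T.min'_mem h

lemma mof_le {T : Finset ℤ} {t : ℤ} (ht : t ∈ T) : mof T ≤ t := by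
  rw [mof_eq ⟨t, ht⟩]; exact Finset.min'_le _ _ ht

lemma count_le (A : Set ℤ) (N : ℕ) (ℓ₀ : ℕ) (hℓ₀ : 0 < ℓ₀) (j : ℕ) :
    (A ∩ Set.Ioc (((j:ℤ)-1)*N) ((j:ℤ)*N)).ncard.choose ℓ₀ ≤
      ∑ B ∈ ((Finset.Ico (0:ℤ) N).powersetCard ℓ₀).filter (fun B => (0:ℤ) ∈ B),
        ({x : ℤ | ∀ b ∈ B, b + x ∈ A} ∩ Set.Ioc (((j:ℤ)-1)*N) ((j:ℤ)*N)).ncard := by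
  classical
  set I : Set ℤ := Set.Ioc (((j:ℤ)-1)*N) ((j:ℤ)*N) with hI
  have hIfin : I.Finite := Set.finite_Ioc _ _
  have hfin : (A ∩ I).Finite := hIfin.inter_of_right A
  set F : Finset ℤ := hfin.toFinset with hF
  have hcard : (A ∩ I).ncard = F.card := Set.ncard_eq_toFinset_card _ hfin
  have hGfin : ∀ B : Finset ℤ, ({x : ℤ | ∀ b ∈ B, b + x ∈ A} ∩ I).Finite :=
    fun B => hIfin.inter_of_right _
  set Pat := ((Finset.Ico (0:ℤ) N).powersetCard ℓ₀).filter (fun B => (0:ℤ) ∈ B) with hPat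
  have key : (F.powersetCard ℓ₀).card ≤
      (Pat.sigma (fun B => (hGfin B).toFinset)).card := by
    apply Finset.card_le_card_of_injOn
      (fun T => ⟨T.image (fun t => t - mof T), mof T⟩)
    · intro T hT
      rw [Finset.mem_coe, Finset.mem_powersetCard] at hT
      obtain ⟨hTF, hTc⟩ := hT
      have hne : T.Nonempty := Finset.card_pos.mp (hTc ▸ hℓ₀)
      have hmemI : ∀ t ∈ T, t ∈ A ∧ t ∈ I := by
        intro t ht
        have := hTF ht
        rw [hF, Set.Finite.mem_toFinset] at this
        exact this
      have hmT := mof_mem hne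
      rw [Finset.mem_coe, Finset.mem_sigma]
      constructor
      · rw [hPat, Finset.mem_filter, Finset.mem_powersetCard]
        refine ⟨⟨?_, ?_⟩, ?_⟩
        · intro b hb
          obtain ⟨t, ht, rfl⟩ := Finset.mem_image.mp hb
          rw [Finset.mem_Ico]
          have h1 := (hmemI t ht).2
          have h2 := (hmemI _ hmT).2
          rw [hI, Set.mem_Ioc] at h1 h2
          constructor
          · simp [mof_le ht]
          · have hN : (0:ℤ) < N := by
              by_contra h
              push_neg at h
              have := h1.1.trans_le h1.2
              nlinarith [h1.1, h1.2, h2.1, h2.2]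
            linarith [h1.2, h2.1]
        · rw [Finset.card_image_of_injective _ sub_left_injective, hTc]
        · exact Finset.mem_image.mpr ⟨mof T, hmT, sub_self _⟩
      · rw [Set.Finite.mem_toFinset]
        refine ⟨?_, (hmemI _ hmT).2⟩
        intro b hb
        obtain ⟨t, ht, rfl⟩ := Finset.mem_image.mp hb
        simpa using (hmemI t ht).1
    · intro T₁ h₁ T₂ h₂ heq
      simp only [Sigma.mk.inj_iff] at heq
      have recover : ∀ T : Finset ℤ, (T.image (fun t => t - mof T)).image
          (fun b => b + mof T) = T := by
        intro T
        rw [Finset.image_image]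
        have h : ((fun b => b + mof T) ∘ fun t => t - mof T) = id := by
          funext t; simp
        rw [h, Finset.image_id]
      have := recover T₁
      rw [heq.1, eq_of_heq heq.2, recover T₂] at this
      exact this.symm
  calc (A ∩ I).ncard.choose ℓ₀ = (F.powersetCard ℓ₀).card := by
        rw [hcard, Finset.card_powersetCard]
      _ ≤ (Pat.sigma fun B => (hGfin B).toFinset).card := key
      _ = ∑ B ∈ Pat, ((hGfin B).toFinset).card := Finset.card_sigma _ _
      _ = ∑ B ∈ Pat, ({x : ℤ | ∀ b ∈ B, b + x ∈ A} ∩ I).ncard := by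
        refine Finset.sum_congr rfl fun B _ => ?_
        rw [Set.ncard_eq_toFinset_card _ (hGfin B)]

lemma pat_card (N ℓ₀ : ℕ) :
    (((Finset.Ico (0:ℤ) N).powersetCard ℓ₀).filter (fun B => (0:ℤ) ∈ B)).card
      ≤ N ^ (ℓ₀ - 1) := by
  classical
  have h1 : (((Finset.Ico (0:ℤ) N).powersetCard ℓ₀).filter (fun B => (0:ℤ) ∈ B)).card
      ≤ ((Finset.Ioo (0:ℤ) N).powersetCard (ℓ₀ - 1)).card := by
    apply Finset.card_le_card_of_injOn (fun B => B.erase 0)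
    · intro B hB
      rw [Finset.mem_coe, Finset.mem_filter, Finset.mem_powersetCard] at hB
      obtain ⟨⟨hsub, hcard⟩, h0⟩ := hB
      rw [Finset.mem_coe, Finset.mem_powersetCard]
      constructor
      · intro b hb
        rw [Finset.mem_erase] at hb
        have := hsub hb.2
        rw [Finset.mem_Ico] at this
        rw [Finset.mem_Ioo]
        exact ⟨lt_of_le_of_ne this.1 (Ne.symm hb.1), this.2⟩
      · rw [Finset.card_erase_of_mem h0, hcard]
    · intro B₁ h₁ B₂ h₂ heq
      rw [Finset.coe_filter, Set.mem_setOf_eq] at h₁ h₂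
      have heq' : B₁.erase 0 = B₂.erase 0 := heq
      rw [← Finset.insert_erase h₁.2, heq', Finset.insert_erase h₂.2]
  have h2 : ((Finset.Ioo (0:ℤ) N).powersetCard (ℓ₀ - 1)).card = (N - 1).choose (ℓ₀ - 1) := by
    rw [Finset.card_powersetCard, Int.card_Ioo]
    congr 1
    omega
  calc _ ≤ (N-1).choose (ℓ₀ -1) := h1.trans_eq h2
    _ ≤ (N-1) ^ (ℓ₀ - 1) := Nat.choose_le_pow _ _
    _ ≤ N ^ (ℓ₀ -1) := Nat.pow_le_pow_left (by omega) _

lemma base_case (ℓ : Fin 1 → ℕ) (A : Set ℤ) (hA : LFree 1 ℓ A) (N : ℕ) :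
    ∑ j ∈ Finset.Icc 1 N, (A ∩ Set.Ioc (((j:ℤ)-1)*N) ((j:ℤ)*N)).ncard ≤ ℓ 0 - 1 := by
  classical
  have hfin : ∀ j : ℕ, (A ∩ Set.Ioc (((j:ℤ)-1)*N) ((j:ℤ)*N)).Finite :=
    fun j => (Set.finite_Ioc _ _).inter_of_right A
  have hsum : ∑ j ∈ Finset.Icc 1 N, (A ∩ Set.Ioc (((j:ℤ)-1)*N) ((j:ℤ)*N)).ncard
      = ((Finset.Icc 1 N).biUnion (fun j => (hfin j).toFinset)).card := by
    rw [Finset.card_biUnion]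
    · exact Finset.sum_congr rfl fun j _ => Set.ncard_eq_toFinset_card _ (hfin j)
    · intro j hj k hk hjk
      rw [Function.onFun, Finset.disjoint_left]
      intro x hx hx'
      rw [Set.Finite.mem_toFinset] at hx hx'
      obtain ⟨-, hx1, hx2⟩ := hx
      obtain ⟨-, hy1, hy2⟩ := hx'
      rcases lt_or_gt_of_ne hjk with h | h
      · have h' : (j:ℤ) < k := by exact_mod_cast h
        nlinarith [Int.ofNat_nonneg N]
      · have h' : (k:ℤ) < j := by exact_mod_cast h
        nlinarith [Int.ofNat_nonneg N]
  rw [hsum]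
  by_contra hcon
  push_neg at hcon
  have hle : ℓ 0 ≤ ((Finset.Icc 1 N).biUnion (fun j => (hfin j).toFinset)).card := by omega
  obtain ⟨T, hTsub, hTcard⟩ := Finset.exists_subset_card_eq hle
  refine hA (fun _ => T) (fun i => by simpa [Subsingleton.elim i 0] using hTcard) ?_
  have : ∑ i : Fin 1, (fun _ => T) i = T := by simp
  rw [this]
  intro x hx
  have := hTsub hx
  rw [Finset.mem_biUnion] at this
  obtain ⟨j, -, hj⟩ := this
  rw [Set.Finite.mem_toFinset] at hj
  exact hj.1


lemma pow_le_choose_aux (ℓ₀ : ℕ) (hℓ₀ : 2 ≤ ℓ₀) (s : ℕ) :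
    (s:ℝ)^ℓ₀ ≤ (2^ℓ₀ * ℓ₀.factorial : ℝ) * (s.choose ℓ₀ : ℝ) + (2*ℓ₀:ℝ)^ℓ₀ := by
  by_cases hs : s ≤ 2*ℓ₀
  · have h1 : (s:ℝ)^ℓ₀ ≤ (2*ℓ₀:ℝ)^ℓ₀ := by
      apply pow_le_pow_left₀ (by positivity)
      exact_mod_cast hs
    have h2 : (0:ℝ) ≤ (2^ℓ₀ * ℓ₀.factorial : ℝ) * (s.choose ℓ₀ : ℝ) := by positivity
    linarith
  · push_neg at hs
    have hb := Nat.pow_le_choose (α := ℝ) ℓ₀ s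
    have hcast : ((s + 1 - ℓ₀ : ℕ) : ℝ) = (s:ℝ) + 1 - ℓ₀ := by
      have : ℓ₀ ≤ s + 1 := by omega
      push_cast [Nat.cast_sub this]
      ring
    rw [hcast, div_le_iff₀ (by positivity)] at hb
    have hsr : 2 * (ℓ₀:ℝ) ≤ s := by exact_mod_cast hs.le
    have h0 : (0:ℝ) ≤ (s:ℝ) + 1 - ℓ₀ := by
      have h2' : (2:ℝ) ≤ ℓ₀ := by exact_mod_cast hℓ₀
      linarith
    have h1 : (s:ℝ) ≤ 2 * ((s:ℝ) + 1 - ℓ₀) := by linarith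
    have h2 : (s:ℝ)^ℓ₀ ≤ (2:ℝ)^ℓ₀ * ((s:ℝ) + 1 - ℓ₀)^ℓ₀ := by
      rw [← mul_pow]
      exact pow_le_pow_left₀ (by positivity) h1 ℓ₀
    have h3 : (2:ℝ)^ℓ₀ * ((s:ℝ) + 1 - ℓ₀)^ℓ₀ ≤ (2:ℝ)^ℓ₀ * ((s.choose ℓ₀ : ℝ) * ℓ₀.factorial) := by
      apply mul_le_mul_of_nonneg_left hb (by positivity)
    have h4 : (0:ℝ) ≤ (2*ℓ₀:ℝ)^ℓ₀ := by positivity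
    calc (s:ℝ)^ℓ₀ ≤ (2:ℝ)^ℓ₀ * ((s.choose ℓ₀ : ℝ) * ℓ₀.factorial) := h2.trans h3
      _ = (2^ℓ₀ * ℓ₀.factorial : ℝ) * (s.choose ℓ₀ : ℝ) := by ring
      _ ≤ _ := by linarith

lemma hoelder {α : Type*} (S : Finset α) (f : α → ℝ) (hf : ∀ i ∈ S, 0 ≤ f i)
    (Q : ℕ) (hQ : 1 ≤ Q) :
    (∑ i ∈ S, f i)^Q ≤ (S.card : ℝ)^(Q-1) * ∑ i ∈ S, f i ^ Q := by
  obtain ⟨n, rfl⟩ : ∃ n, Q = n + 1 := ⟨Q - 1, by omega⟩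
  simpa using pow_sum_le_card_mul_sum_pow hf n

lemma exp_arith (a b : ℕ) (ha : 2 ≤ a) (hb : 1 ≤ b) :
    (a-1)*(b-1) + ((a-1) + (b-1)) = a*b - 1 := by
  obtain ⟨a', rfl⟩ : ∃ a', a = a' + 2 := ⟨a - 2, by omega⟩
  obtain ⟨b', rfl⟩ : ∃ b', b = b' + 1 := ⟨b - 1, by omega⟩
  have h1 : (a'+1)*b' = a'*b' + b' := by ring
  have h2 : (a'+2)*(b'+1) = a'*b' + a' + 2*b' + 2 := by ring
  have e1 : a' + 2 - 1 = a' + 1 := by omega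
  have e2 : b' + 1 - 1 = b' := by omega
  rw [e1, e2, h1, h2]
  omega

lemma key : ∀ n : ℕ, ∀ ℓ : Fin (n+1) → ℕ, (∀ i, 2 ≤ ℓ i) →
    ∃ C : ℝ, 0 < C ∧ ∀ N : ℕ, 1 ≤ N → ∀ A : Set ℤ, LFree (n+1) ℓ A →
      ∑ j ∈ Finset.Icc 1 N,
          ((A ∩ Set.Ioc (((j:ℤ)-1)*N) ((j:ℤ)*N)).ncard : ℝ) ^ (∏ i : Fin n, ℓ i.castSucc)
        ≤ C * (N:ℝ) ^ ((∏ i : Fin n, ℓ i.castSucc) - 1) := by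
  intro n
  induction n with
  | zero =>
    intro ℓ hℓ
    have h0 : 0 < ℓ 0 := by have := hℓ 0; omega
    refine ⟨ℓ 0, by exact_mod_cast h0, ?_⟩
    intro N hN A hA
    have hP : (∏ i : Fin 0, ℓ i.castSucc) = 1 := by simp
    rw [hP]
    simp only [pow_one, Nat.sub_self, pow_zero, mul_one]
    have hb := base_case ℓ A hA N
    calc ∑ j ∈ Finset.Icc 1 N, ((A ∩ Set.Ioc (((j:ℤ)-1)*N) ((j:ℤ)*N)).ncard : ℝ)
        = ((∑ j ∈ Finset.Icc 1 N, (A ∩ Set.Ioc (((j:ℤ)-1)*N) ((j:ℤ)*N)).ncard : ℕ) : ℝ) := by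
          push_cast; ring
      _ ≤ ((ℓ 0 - 1 : ℕ) : ℝ) := by exact_mod_cast hb
      _ ≤ (ℓ 0 : ℝ) := by
          have : (ℓ 0 - 1 : ℕ) ≤ ℓ 0 := by omega
          exact_mod_cast this
  | succ n IH =>
    intro ℓ hℓ
    obtain ⟨C', hC'pos, hC'⟩ := IH (ℓ ∘ Fin.succ) (fun i => hℓ _)
    set ℓ₀ := ℓ 0 with hℓ₀def
    set Q := ∏ i : Fin n, (ℓ ∘ Fin.succ) i.castSucc with hQdef
    have hℓ₀ : 2 ≤ ℓ₀ := hℓ 0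
    have hQ : 1 ≤ Q := by
      rw [hQdef]
      exact Nat.one_le_iff_ne_zero.mpr (Finset.prod_ne_zero_iff.mpr (fun i _ => by
        have := hℓ (i.castSucc.succ)
        simp only [Function.comp_apply]
        omega))
    have hP : (∏ i : Fin (n+1), ℓ i.castSucc) = ℓ₀ * Q := by
      rw [Fin.prod_univ_succ, hQdef, Fin.castSucc_zero]
      exact congrArg (ℓ 0 * ·) (Finset.prod_congr rfl fun i _ => by
        simp only [Function.comp_apply, Fin.succ_castSucc])
    set K : ℝ := 2^ℓ₀ * ℓ₀.factorial with hK
    set K' : ℝ := (2*ℓ₀:ℝ)^ℓ₀ with hK'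
    refine ⟨2^(Q-1) * K^Q * C' + 2^(Q-1) * K'^Q, by positivity, ?_⟩
    intro N hN A hA
    rw [hP]
    set Pat := ((Finset.Ico (0:ℤ) N).powersetCard ℓ₀).filter (fun B => (0:ℤ) ∈ B) with hPatdef
    set g : Finset ℤ → ℕ → ℝ := fun B j =>
      (({x : ℤ | ∀ b ∈ B, b + x ∈ A} ∩ Set.Ioc (((j:ℤ)-1)*N) ((j:ℤ)*N)).ncard : ℝ) with hg
    set s : ℕ → ℕ := fun j => (A ∩ Set.Ioc (((j:ℤ)-1)*N) ((j:ℤ)*N)).ncard with hs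
    have hgnonneg : ∀ B j, 0 ≤ g B j := fun B j => Nat.cast_nonneg _
    -- per-block bound on choose
    have hch : ∀ j, ((s j).choose ℓ₀ : ℝ) ≤ ∑ B ∈ Pat, g B j := by
      intro j
      have := count_le A N ℓ₀ (by omega) j
      calc ((s j).choose ℓ₀ : ℝ) ≤ ((∑ B ∈ Pat, ({x : ℤ | ∀ b ∈ B, b + x ∈ A} ∩
            Set.Ioc (((j:ℤ)-1)*N) ((j:ℤ)*N)).ncard : ℕ) : ℝ) := by exact_mod_cast this
        _ = ∑ B ∈ Pat, g B j := by push_cast; rfl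
    -- IH applied to each pattern
    have hSB : ∀ B ∈ Pat, ∑ j ∈ Finset.Icc 1 N, (g B j)^Q ≤ C' * (N:ℝ)^(Q-1) := by
      intro B hB
      have hBcard : B.card = ℓ₀ := by
        rw [hPatdef, Finset.mem_filter, Finset.mem_powersetCard] at hB
        exact hB.1.2
      exact hC' N hN _ (lfree_shift hA B hBcard)
    -- pattern count
    have hPatcard : (Pat.card : ℝ) ≤ (N:ℝ)^(ℓ₀-1) := by
      exact_mod_cast pat_card N ℓ₀
    -- main chain
    have step1 : ∀ j, ((s j : ℝ))^(ℓ₀*Q) ≤ 2^(Q-1) * (K^Q * ((s j).choose ℓ₀ : ℝ)^Q + K'^Q) := by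
      intro j
      have h1 : ((s j : ℝ))^(ℓ₀*Q) = (((s j : ℝ))^ℓ₀)^Q := by rw [pow_mul]
      have h2 : (((s j : ℝ))^ℓ₀)^Q ≤ (K * ((s j).choose ℓ₀ : ℝ) + K')^Q := by
        apply pow_le_pow_left₀ (by positivity)
        exact pow_le_choose_aux ℓ₀ hℓ₀ (s j)
      have h3 : (K * ((s j).choose ℓ₀ : ℝ) + K')^Q ≤
          2^(Q-1) * ((K * ((s j).choose ℓ₀ : ℝ))^Q + K'^Q) := by
        apply add_pow_le (by positivity) (by positivity)
      rw [h1]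
      refine h2.trans (h3.trans ?_)
      rw [mul_pow]
    have step2 : ∀ j, (((s j).choose ℓ₀ : ℝ))^Q ≤ (N:ℝ)^((ℓ₀-1)*(Q-1)) * ∑ B ∈ Pat, (g B j)^Q := by
      intro j
      calc (((s j).choose ℓ₀ : ℝ))^Q ≤ (∑ B ∈ Pat, g B j)^Q := by
            apply pow_le_pow_left₀ (by positivity) (hch j)
        _ ≤ (Pat.card : ℝ)^(Q-1) * ∑ B ∈ Pat, (g B j)^Q :=
            hoelder Pat _ (fun B _ => hgnonneg B j) Q hQ
        _ ≤ ((N:ℝ)^(ℓ₀-1))^(Q-1) * ∑ B ∈ Pat, (g B j)^Q := by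
            apply mul_le_mul_of_nonneg_right
            · exact pow_le_pow_left₀ (by positivity) hPatcard _
            · exact Finset.sum_nonneg fun B _ => by positivity
        _ = (N:ℝ)^((ℓ₀-1)*(Q-1)) * ∑ B ∈ Pat, (g B j)^Q := by rw [← pow_mul]
    have hsum2 : ∑ j ∈ Finset.Icc 1 N, (((s j).choose ℓ₀ : ℝ))^Q ≤
        (N:ℝ)^((ℓ₀-1)*(Q-1)) * ((N:ℝ)^(ℓ₀-1) * (C' * (N:ℝ)^(Q-1))) := by
      calc ∑ j ∈ Finset.Icc 1 N, (((s j).choose ℓ₀ : ℝ))^Q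
          ≤ ∑ j ∈ Finset.Icc 1 N, (N:ℝ)^((ℓ₀-1)*(Q-1)) * ∑ B ∈ Pat, (g B j)^Q :=
            Finset.sum_le_sum fun j _ => step2 j
        _ = (N:ℝ)^((ℓ₀-1)*(Q-1)) * ∑ j ∈ Finset.Icc 1 N, ∑ B ∈ Pat, (g B j)^Q := by
            rw [Finset.mul_sum]
        _ = (N:ℝ)^((ℓ₀-1)*(Q-1)) * ∑ B ∈ Pat, ∑ j ∈ Finset.Icc 1 N, (g B j)^Q := by
            rw [Finset.sum_comm]
        _ ≤ (N:ℝ)^((ℓ₀-1)*(Q-1)) * ∑ B ∈ Pat, C' * (N:ℝ)^(Q-1) := by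
            apply mul_le_mul_of_nonneg_left (Finset.sum_le_sum hSB) (by positivity)
        _ = (N:ℝ)^((ℓ₀-1)*(Q-1)) * ((Pat.card : ℝ) * (C' * (N:ℝ)^(Q-1))) := by
            rw [Finset.sum_const, nsmul_eq_mul]
        _ ≤ (N:ℝ)^((ℓ₀-1)*(Q-1)) * ((N:ℝ)^(ℓ₀-1) * (C' * (N:ℝ)^(Q-1))) := by
            apply mul_le_mul_of_nonneg_left _ (by positivity)
            apply mul_le_mul_of_nonneg_right hPatcard (by positivity)
    -- exponent arithmetic
    have hexp : (ℓ₀-1)*(Q-1) + ((ℓ₀-1) + (Q-1)) = ℓ₀*Q - 1 := exp_arith ℓ₀ Q hℓ₀ hQ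
    have hNexp : (N:ℝ)^((ℓ₀-1)*(Q-1)) * ((N:ℝ)^(ℓ₀-1) * (N:ℝ)^(Q-1)) = (N:ℝ)^(ℓ₀*Q-1) := by
      rw [← pow_add, ← pow_add, hexp]
    have hN1 : (N:ℝ) ≤ (N:ℝ)^(ℓ₀*Q-1) := by
      have h1 : 1 ≤ ℓ₀*Q - 1 := by
        have h2 : 2*1 ≤ ℓ₀*Q := Nat.mul_le_mul hℓ₀ hQ
        omega
      calc (N:ℝ) = (N:ℝ)^1 := (pow_one _).symm
        _ ≤ (N:ℝ)^(ℓ₀*Q-1) := pow_le_pow_right₀ (by exact_mod_cast hN) h1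
    have hcardIcc : ((Finset.Icc 1 N).card : ℝ) = N := by
      rw [Nat.card_Icc]; push_cast; ring
    calc ∑ j ∈ Finset.Icc 1 N, ((s j : ℕ) : ℝ)^(ℓ₀*Q)
        ≤ ∑ j ∈ Finset.Icc 1 N, 2^(Q-1) * (K^Q * ((s j).choose ℓ₀ : ℝ)^Q + K'^Q) :=
          Finset.sum_le_sum fun j _ => step1 j
      _ = ∑ j ∈ Finset.Icc 1 N, (2^(Q-1) * K^Q * ((s j).choose ℓ₀ : ℝ)^Q
          + 2^(Q-1) * K'^Q) := Finset.sum_congr rfl fun j _ => by ring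
      _ = 2^(Q-1) * K^Q * (∑ j ∈ Finset.Icc 1 N, ((s j).choose ℓ₀ : ℝ)^Q)
          + 2^(Q-1) * K'^Q * ((Finset.Icc 1 N).card : ℝ) := by
          rw [Finset.sum_add_distrib, ← Finset.mul_sum, Finset.sum_const, nsmul_eq_mul]
          ring
      _ ≤ 2^(Q-1) * K^Q * ((N:ℝ)^((ℓ₀-1)*(Q-1)) * ((N:ℝ)^(ℓ₀-1) * (C' * (N:ℝ)^(Q-1))))
          + 2^(Q-1) * K'^Q * (N:ℝ) := by
          apply add_le_add
          · exact mul_le_mul_of_nonneg_left hsum2 (by positivity)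
          · rw [hcardIcc]
      _ ≤ (2^(Q-1) * K^Q * C' + 2^(Q-1) * K'^Q) * (N:ℝ)^(ℓ₀*Q-1) := by
          have e1 : (N:ℝ)^((ℓ₀-1)*(Q-1)) * ((N:ℝ)^(ℓ₀-1) * (C' * (N:ℝ)^(Q-1)))
              = C' * (N:ℝ)^(ℓ₀*Q-1) := by
            rw [← hNexp]; ring
          rw [e1]
          have := mul_le_mul_of_nonneg_left hN1 (by positivity : (0:ℝ) ≤ 2^(Q-1) * K'^Q)
          nlinarith [this]

/-- there is a constant `C` depending only on `r` and `ℓ₁,…,ℓ_r`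
(here the number of summands is `m + 2 ≥ 2`) such that for every `N ≥ 1` and every
`L^{(r)}_{ℓ₁,…,ℓ_r}`-free set `A` of integers, with `A_j = A ∩ ((j−1)N, jN]`,
`Σ_{j ≤ N} |A_j|^{ℓ₁⋯ℓ_{r−1}} ≤ C · N^{ℓ₁⋯ℓ_{r−1} − 1}`. -/
theorem stmt17 (m : ℕ) (ℓ : Fin (m + 2) → ℕ) (hℓ : ∀ i, 2 ≤ ℓ i) (hmono : Monotone ℓ) :
    ∃ C : ℝ, 0 < C ∧ ∀ N : ℕ, 1 ≤ N → ∀ A : Set ℤ, LFree (m + 2) ℓ A →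
      ∑ j ∈ Finset.Icc 1 N,
          ((A ∩ Set.Ioc (((j : ℤ) - 1) * N) ((j : ℤ) * N)).ncard : ℝ)
            ^ (∏ i : Fin (m + 1), ℓ i.castSucc)
        ≤ C * (N : ℝ) ^ ((∏ i : Fin (m + 1), ℓ i.castSucc) - 1) := by
  exact key (m + 1) ℓ hℓ
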